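/- Let H be a connected multigraph with at least one edge and let G be a multigraph. Define G* from G by adding, for every vertex v of G and every i ∈ {1, …, mdeg_G(v)}, new vertices v′ᵢ, v″ᵢ with a double edge {v′ᵢ, v″ᵢ} and single edges {v, v′ᵢ}, {v, v″ᵢ}; define H⁺ from H by adding, for every vertex u of H, new vertices u′, u″ with a double edge {u′, u″} and single edges {u, u′}, {u, u″}. Then the maximum size of an H⁺-immersion packing in G* is at most the maximum size of an H-immersion packing in G. -/

import Mathlib

open scoped Classical

/-- A finite loopless multigraph: `E` indexes edges, `ends e` gives the endpoints. -/
structure Multigraph (V : Type) (E : Type) where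
  ends : E → Sym2 V
  loopless : ∀ e, ¬ (ends e).IsDiag

namespace Multigraph

variable {V E V1 E1 V2 E2 : Type}

/-- Multidegree: number of edges (with multiplicity) incident with `v`. -/
noncomputable def mdeg (G : Multigraph V E) [Fintype E] (v : V) : ℕ :=
  (Finset.univ.filter (fun e => v ∈ G.ends e)).card

/-- Walks in a multigraph, remembering which edge instance is used at each step. -/
inductive Walk (G : Multigraph V E) : V → V → Type where
  | nil (v : V) : Walk G v v
  | cons {u v w : V} (e : E) (he : G.ends e = s(u, v)) (p : Walk G v w) : Walk G u w

namespace Walk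

variable {G : Multigraph V E}

def support : {u v : V} → G.Walk u v → List V
  | u, _, .nil _ => [u]
  | u, _, .cons _ _ p => u :: p.support

def edges : {u v : V} → G.Walk u v → List E
  | _, _, .nil _ => []
  | _, _, .cons e _ p => e :: p.edges

/-- A walk is a path when its vertices are pairwise distinct. -/
def IsPath {u v : V} (p : G.Walk u v) : Prop := p.support.Nodup

/-- The internal vertices of a walk (all vertices except the two endpoints). -/
def interior {u v : V} (p : G.Walk u v) : List V := p.support.tail.dropLast

end Walk

/-- An `H`-immersion model in `G`. -/
structure ImmersionModel (H : Multigraph V1 E1) (G : Multigraph V E) where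
  vmap : V1 → V
  vmap_inj : Function.Injective vmap
  src : E1 → V1
  tgt : E1 → V1
  ends_eq : ∀ e, H.ends e = s(src e, tgt e)
  path : ∀ e, G.Walk (vmap (src e)) (vmap (tgt e))
  path_isPath : ∀ e, (path e).IsPath
  edge_disjoint : ∀ e₁ e₂, e₁ ≠ e₂ → ∀ x, x ∈ (path e₁).edges → x ∉ (path e₂).edges

namespace ImmersionModel

variable {H : Multigraph V1 E1} {G : Multigraph V E}

/-- The edges of the immersion expansion associated with the model. -/
def edgeSet (m : ImmersionModel H G) : Set E := {x | ∃ e, x ∈ (m.path e).edges}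

/-- The vertices of the immersion expansion associated with the model. -/
def vertSet (m : ImmersionModel H G) : Set V :=
  {x | (∃ a, m.vmap a = x) ∨ ∃ e, x ∈ (m.path e).support}

end ImmersionModel

/-- `G` contains `H` as an immersion. -/
def Immersed (H : Multigraph V1 E1) (G : Multigraph V E) : Prop :=
  Nonempty (ImmersionModel H G)

/-- Deleting a set of edges from a multigraph. -/
def deleteEdges (G : Multigraph V E) (F : Set E) : Multigraph V {e : E // e ∉ F} where
  ends e := G.ends e.1
  loopless e := G.loopless e.1

/-- The minimum size of an `H`-cover of `G`: a set of edges meeting every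
`H`-immersion expansion. (By convention `sInf ∅ = 0`.) -/
noncomputable def coverNum (H : Multigraph V1 E1) (G : Multigraph V E) : ℕ :=
  sInf {n | ∃ C : Finset E, ¬ Immersed H (G.deleteEdges ↑C) ∧ C.card = n}

/-- The maximum size of an `H`-packing in `G`: a collection of pairwise
edge-disjoint `H`-immersion expansions. -/
noncomputable def packNum (H : Multigraph V1 E1) (G : Multigraph V E) : ℕ :=
  sSup {n | ∃ f : Fin n → ImmersionModel H G,
    ∀ i j, i ≠ j → Disjoint (f i).edgeSet (f j).edgeSet}

/-- Connectivity of a multigraph. -/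
def Connected (G : Multigraph V E) : Prop :=
  Nonempty V ∧ ∀ u v : V, Nonempty (G.Walk u v)

/-- Reachability in `G` avoiding the vertex set `X`. -/
def ReachAvoid (G : Multigraph V E) (X : Set V) (u v : V) : Prop :=
  ∃ p : G.Walk u v, ∀ x ∈ p.support, x ∉ X

/-- The underlying simple graph of a multigraph. -/
def toSimple (G : Multigraph V E) : SimpleGraph V where
  Adj u v := u ≠ v ∧ ∃ e, G.ends e = s(u, v)
  symm := by
    constructor
    rintro u v ⟨h, e, he⟩
    exact ⟨h.symm, e, by rw [he, Sym2.eq_swap]⟩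
  loopless := ⟨fun v h => h.1 rfl⟩

end Multigraph

section Minor

/-- `A` is a minor of `B` (branch-set/minor-model definition). -/
def SimpleGraphMinorOf {α β : Type} (A : SimpleGraph α) (B : SimpleGraph β) : Prop :=
  ∃ C : α → Set β,
    (∀ a, (C a).Nonempty) ∧
    (∀ a, (B.induce (C a)).Connected) ∧
    (Pairwise fun a a' => Disjoint (C a) (C a')) ∧
    (∀ a a', A.Adj a a' → ∃ x ∈ C a, ∃ y ∈ C a', B.Adj x y)

end Minor

namespace Multigraph

variable {V E : Type}

/-- Planarity of a loopless multigraph, via Wagner's theorem: no `K₅` and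
no `K₃,₃` minor in the underlying simple graph. -/
def Planar (G : Multigraph V E) : Prop :=
  ¬ SimpleGraphMinorOf (SimpleGraph.completeGraph (Fin 5)) G.toSimple ∧
  ¬ SimpleGraphMinorOf (completeBipartiteGraph (Fin 3) (Fin 3)) G.toSimple

lemma isDiag_map_inl {α β : Type} (p : Sym2 α) :
    (p.map (Sum.inl : α → α ⊕ β)).IsDiag ↔ p.IsDiag := by
  induction p using Sym2.ind with
  | _ a b => simp

/-- `G⁺`: attach to every vertex `v` a gadget of two new vertices `(v,false)`,
`(v,true)` joined by a double edge, each joined to `v` by a single edge. -/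
def plus (G : Multigraph V E) :
    Multigraph (V ⊕ (V × Bool)) (E ⊕ ((V × Fin 2) ⊕ (V × Bool))) where
  ends
    | .inl e => (G.ends e).map .inl
    | .inr (.inl (v, _)) => s(.inr (v, false), .inr (v, true))
    | .inr (.inr (v, b)) => s(.inl v, .inr (v, b))
  loopless := by
    rintro (e | ⟨v, i⟩ | ⟨v, b⟩) h
    · exact G.loopless e ((isDiag_map_inl _).1 h)
    · simp at h
    · simp at h

/-- `G*`: attach, at every vertex `v` and for every `i ∈ {1,…,mdeg v}`, a gadget of two
new vertices joined by a double edge, each joined to `v` by a single edge. -/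
noncomputable def star (G : Multigraph V E) [Fintype E] :
    Multigraph (V ⊕ ((Σ v : V, Fin (G.mdeg v)) × Bool))
      (E ⊕ (((Σ v : V, Fin (G.mdeg v)) × Fin 2) ⊕ ((Σ v : V, Fin (G.mdeg v)) × Bool))) where
  ends
    | .inl e => (G.ends e).map .inl
    | .inr (.inl (p, _)) => s(.inr (p, false), .inr (p, true))
    | .inr (.inr (p, b)) => s(.inl p.1, .inr (p, b))
  loopless := by
    rintro (e | ⟨p, i⟩ | ⟨p, b⟩) h
    · exact G.loopless e ((isDiag_map_inl _).1 h)
    · simp at h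
    · simp at h

/-- The subdivision of `G` in which the edge `e` (oriented from `src e` to `tgt e`)
is subdivided `n e` times, i.e. replaced by a path with `n e` internal vertices. -/
def subdivide (G : Multigraph V E) (src tgt : E → V)
    (hst : ∀ e, G.ends e = s(src e, tgt e)) (n : E → ℕ) :
    Multigraph (V ⊕ (Σ e : E, Fin (n e))) (Σ e : E, Fin (n e + 1)) where
  ends := fun q =>
    s(if _ : q.2.val = 0 then Sum.inl (src q.1)
        else Sum.inr ⟨q.1, ⟨q.2.val - 1, by have := q.2.isLt; omega⟩⟩,
      if _ : q.2.val = n q.1 then Sum.inl (tgt q.1)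
        else Sum.inr ⟨q.1, ⟨q.2.val, by have := q.2.isLt; omega⟩⟩)
  loopless := by
    rintro ⟨e, i⟩ h
    rw [Sym2.mk_isDiag_iff] at h
    split_ifs at h with h1 h2 h2 <;>
      first
        | exact Sum.noConfusion h
        | (have hl := G.loopless e
           rw [hst e, Sym2.mk_isDiag_iff] at hl
           exact hl (Sum.inl.inj h))
        | (have h3 := Sum.inr.inj h
           simp at h1 h3 <;> simp only [Fin.ext_iff, Fin.val_zero] at h1 <;> omega)

end Multigraph

namespace Multigraph

/-- The multigraph underlying a simple graph. -/
def ofSimple {α : Type} (S : SimpleGraph α) : Multigraph α S.edgeSet where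
  ends e := e.1
  loopless e := S.not_isDiag_of_mem_edgeSet e.2

/-- A strong immersion model: additionally, no branch vertex is an internal
vertex of a certifying path. -/
structure StrongImmersionModel {V1 E1 V E : Type} (H : Multigraph V1 E1) (G : Multigraph V E)
    extends ImmersionModel H G where
  not_internal : ∀ (e : E1) (x : V1), vmap x ∉ (path e).interior

/-- An `H`-topological-minor model in `G`: certifying paths are internally
vertex-disjoint and their internal vertices avoid the branch vertices. -/
structure TopMinorModel {V1 E1 V E : Type} (H : Multigraph V1 E1) (G : Multigraph V E) where
  vmap : V1 → V
  vmap_inj : Function.Injective vmap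
  src : E1 → V1
  tgt : E1 → V1
  ends_eq : ∀ e, H.ends e = s(src e, tgt e)
  path : ∀ e, G.Walk (vmap (src e)) (vmap (tgt e))
  path_isPath : ∀ e, (path e).IsPath
  internal_disjoint : ∀ e₁ e₂, e₁ ≠ e₂ → ∀ x, x ∈ (path e₁).interior → x ∉ (path e₂).support
  internal_avoid : ∀ (e : E1) (x : V1), vmap x ∉ (path e).interior

end Multigraph

section Walls

/-- The `m × n` grid graph. -/
def gridGraph (m n : ℕ) : SimpleGraph (Fin m × Fin n) where
  Adj p q := (p.1 = q.1 ∧ (p.2.val + 1 = q.2.val ∨ q.2.val + 1 = p.2.val)) ∨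
             (p.2 = q.2 ∧ (p.1.val + 1 = q.1.val ∨ q.1.val + 1 = p.1.val))
  symm := by constructor; rintro p q (⟨h, h'⟩ | ⟨h, h'⟩) <;> [left; right] <;> exact ⟨h.symm, h'.symm⟩
  loopless := by constructor; rintro p (⟨-, h | h⟩ | ⟨-, h | h⟩) <;> omega

/-- The `k×k` grid `Γ_k` as a multigraph. -/
def Gamma (k : ℕ) : Multigraph (Fin k × Fin k) (gridGraph k k).edgeSet :=
  Multigraph.ofSimple (gridGraph k k)

/-- The `(k+1) × (2k+2)` grid with the vertical edges `{(x,y),(x+1,y)}` with `x+y` odd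
(in 1-indexed coordinates) removed. -/
def wallPre (k : ℕ) : SimpleGraph (Fin (k + 1) × Fin (2 * k + 2)) where
  Adj p q := (gridGraph (k + 1) (2 * k + 2)).Adj p q ∧
    ¬ (p.2 = q.2 ∧ (min p.1.val q.1.val + p.2.val) % 2 = 1)
  symm := by
    constructor
    rintro p q ⟨h, h'⟩
    refine ⟨h.symm, fun ⟨hc, hp⟩ => h' ⟨hc.symm, ?_⟩⟩
    rw [Nat.min_comm] at hp
    rw [← hc]
    exact hp
  loopless := ⟨fun p h => (gridGraph _ _).loopless.irrefl p h.1⟩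

/-- Degree of a vertex in `wallPre k`. -/
noncomputable def wallPreDeg (k : ℕ) (v : Fin (k + 1) × Fin (2 * k + 2)) : ℕ :=
  (Finset.univ.filter (fun w => (wallPre k).Adj v w)).card

/-- The vertex set of the `k`-wall: vertices of degree `≠ 1`. -/
def wallVerts (k : ℕ) : Set (Fin (k + 1) × Fin (2 * k + 2)) :=
  {v | wallPreDeg k v ≠ 1}

/-- The `k`-wall `W_k`, as a simple graph. -/
noncomputable def wallSimple (k : ℕ) : SimpleGraph (wallVerts k) :=
  (wallPre k).induce (wallVerts k)

/-- The `k`-wall `W_k`, as a multigraph. -/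
noncomputable def Wall (k : ℕ) : Multigraph (wallVerts k) (wallSimple k).edgeSet :=
  Multigraph.ofSimple (wallSimple k)

/-- The doubled edges of `W⁺_k`: the horizontal edges lying on both a vertical and a
horizontal path of the wall, i.e. those whose lower column index is odd (1-indexed). -/
def isDoubledEdge (k : ℕ) (p : Sym2 (wallVerts k)) : Prop :=
  ∃ a b : wallVerts k, p = s(a, b) ∧ (a : Fin (k + 1) × Fin (2 * k + 2)).1 = (b : Fin (k + 1) × Fin (2 * k + 2)).1 ∧
    (b : Fin (k + 1) × Fin (2 * k + 2)).2.val = (a : Fin (k + 1) × Fin (2 * k + 2)).2.val + 1 ∧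
    (a : Fin (k + 1) × Fin (2 * k + 2)).2.val % 2 = 0

/-- `W⁺_k`: the `k`-wall with a second parallel copy of every doubled edge. -/
noncomputable def WallPlus (k : ℕ) :
    Multigraph (wallVerts k)
      ((wallSimple k).edgeSet ⊕ {p : Sym2 (wallVerts k) // p ∈ (wallSimple k).edgeSet ∧ isDoubledEdge k p}) where
  ends
    | .inl e => e.1
    | .inr e => e.1
  loopless := by
    rintro (e | e)
    · exact (wallSimple k).not_isDiag_of_mem_edgeSet e.2
    · exact (wallSimple k).not_isDiag_of_mem_edgeSet e.2.1

end Walls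

namespace Multigraph

variable {V E : Type}

/-- Tree-partition width of a multigraph (bags may be empty; w.l.o.g. bags are
indexed by the vertices themselves). -/
noncomputable def tpw (G : Multigraph V E) [Fintype V] [Fintype E] : ℕ :=
  sInf {w | ∃ T : SimpleGraph V, T.IsTree ∧ ∃ bag : V → V,
    (Fintype.card V = 1 ∨
      ∀ (e : E) (a b : V), G.ends e = s(a, b) → bag a = bag b ∨ T.Adj (bag a) (bag b)) ∧
    (∀ t : V, (Finset.univ.filter (fun v => bag v = t)).card ≤ w) ∧
    (∀ t t' : V, T.Adj t t' →
      (Finset.univ.filter (fun e : E =>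
        ∃ a b, G.ends e = s(a, b) ∧ bag a = t ∧ bag b = t')).card ≤ w)}

section ThreeCenter

variable {W : Type} [Fintype W]

/-- Degree of `v` in the state `(A, m)`: `A` is the set of remaining vertices and
`m` gives edge multiplicities. -/
noncomputable def stDeg (A : Finset W) (m : Sym2 W → ℕ) (v : W) : ℕ :=
  ∑ w ∈ A.erase v, m s(v, w)

/-- One reduction step of the 3-center construction relative to the marked set `X`:
delete a vertex of degree one, or suppress (dissolve) a vertex of degree two not in `X`. -/
inductive CStep (X : Set W) :
    Finset W × (Sym2 W → ℕ) → Finset W × (Sym2 W → ℕ) → Prop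
  | delete (A : Finset W) (m : Sym2 W → ℕ) (v : W) (hv : v ∈ A) (hd : stDeg A m v = 1) :
      CStep X (A, m) (A.erase v, fun p => if v ∈ p then 0 else m p)
  | suppress (A : Finset W) (m : Sym2 W → ℕ) (v a b : W) (hv : v ∈ A) (hx : v ∉ X)
      (ha : a ∈ A) (hb : b ∈ A) (hav : a ≠ v) (hbv : b ≠ v) (hd : stDeg A m v = 2)
      (h1 : 1 ≤ m s(v, a)) (h2 : a = b → m s(v, a) = 2) (h3 : a ≠ b → 1 ≤ m s(v, b)) :
      CStep X (A, m) (A.erase v,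
        fun p => if v ∈ p then 0 else if a ≠ b ∧ p = s(a, b) then m p + 1 else m p)

/-- The number of vertices of the 3-center of the marked multigraph given by the
state `(A, m)` with marked set `X`: the size of a reduct on which no step applies. -/
noncomputable def centerSize (X : Set W) (A : Finset W) (m : Sym2 W → ℕ) : ℕ :=
  sInf {c | ∃ s : Finset W × (Sym2 W → ℕ),
    Relation.ReflTransGen (CStep X) (A, m) s ∧ (∀ s', ¬ CStep X s s') ∧ s.1.card = c}

end ThreeCenter

section TCW

variable {n : ℕ}

/-- The consolidation map for the torso at node `t` of a tree-cut decomposition: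
a vertex whose bag is `t` is kept, and any other vertex is sent to the peripheral
vertex indexed by the neighbour `u` of `t` whose branch contains its bag. -/
noncomputable def consMap (T : SimpleGraph (Fin n)) (bag : V → Fin n) (t : Fin n) (a : V) :
    V ⊕ Fin n :=
  if bag a = t then Sum.inl a
  else if h : ∃ u, T.Adj t u ∧ (T.deleteEdges {s(t, u)}).Reachable (bag a) u
    then Sum.inr h.choose else Sum.inl a

/-- The vertex set of the torso at `t`: the bag of `t` together with one peripheral
vertex for each neighbour of `t` in the decomposition tree. -/
noncomputable def torsoA [Fintype V] (T : SimpleGraph (Fin n)) (bag : V → Fin n) (t : Fin n) :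
    Finset (V ⊕ Fin n) :=
  (Finset.univ.filter (fun a : V => bag a = t)).image Sum.inl ∪
    (Finset.univ.filter (fun u : Fin n => T.Adj t u)).image Sum.inr

/-- The edge multiplicities of the torso at `t`. -/
noncomputable def torsoM (G : Multigraph V E) [Fintype E] (T : SimpleGraph (Fin n))
    (bag : V → Fin n) (t : Fin n) : Sym2 (V ⊕ Fin n) → ℕ :=
  fun p => if p.IsDiag then 0
    else (Finset.univ.filter (fun e : E => (G.ends e).map (consMap T bag t) = p)).card

/-- The adhesion of the tree edge `{t, t'}`: the number of edges of `G` whose endpoints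
lie in bags on different sides of the edge. -/
noncomputable def adhE (G : Multigraph V E) [Fintype E] (T : SimpleGraph (Fin n))
    (bag : V → Fin n) (t t' : Fin n) : ℕ :=
  (Finset.univ.filter (fun e : E => ∃ a b, G.ends e = s(a, b) ∧
    (T.deleteEdges {s(t, t')}).Reachable (bag a) t ∧
    (T.deleteEdges {s(t, t')}).Reachable (bag b) t')).card

/-- Tree-cut width of a multigraph: the minimum, over tree-cut decompositions, of
the maximum of all adhesions and of the numbers of vertices of the 3-centers
of the torsos. -/
noncomputable def tcw (G : Multigraph V E) [Fintype V] [Fintype E] : ℕ :=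
  sInf {w | ∃ (n : ℕ) (T : SimpleGraph (Fin n)), T.IsTree ∧ ∃ bag : V → Fin n,
    (∀ t t', T.Adj t t' → adhE G T bag t t' ≤ w) ∧
    (∀ t, centerSize (Sum.inl '' {a | bag a = t}) (torsoA T bag t) (torsoM G T bag t) ≤ w)}

end TCW

end Multigraph

section PackProof

namespace Multigraph

variable {V E V1 E1 : Type}

lemma sym2_exists_rep {α : Type} (z : Sym2 α) : ∃ a b, z = s(a, b) := by
  induction z using Sym2.ind with
  | _ x y => exact ⟨x, y, rfl⟩

lemma Walk.start_mem_support' {G : Multigraph V E} : ∀ {u v : V} (w : G.Walk u v),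
    u ∈ w.support
  | _, _, .nil _ => by simp [Walk.support]
  | _, _, .cons e he p => by simp [Walk.support]

lemma Walk.edges_ne_nil' {G : Multigraph V E} {u v : V} (w : G.Walk u v) (h : u ≠ v) :
    w.edges ≠ [] := by
  cases w with
  | nil => exact absurd rfl h
  | cons e he p => simp [Walk.edges]

variable (G : Multigraph V E) [Fintype E]

/-- Any walk in `G*` with exactly one endpoint inside the gadget pair at `q`
uses one of the two cut edges of the gadget. -/
lemma star_cross (q : Σ v : V, Fin (G.mdeg v)) :
    ∀ {x y} (w : G.star.Walk x y),
      ((∃ c, x = Sum.inr (q, c)) ∧ ¬ (∃ c, y = Sum.inr (q, c))) ∨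
      ((¬ ∃ c, x = Sum.inr (q, c)) ∧ (∃ c, y = Sum.inr (q, c))) →
      ∃ b, Sum.inr (Sum.inr (q, b)) ∈ w.edges := by
  intro x y w
  induction w with
  | nil v =>
    rintro (⟨h1, h2⟩ | ⟨h1, h2⟩)
    · exact absurd h1 h2
    · exact absurd h2 h1
  | @cons u v yw e he p ih =>
    rintro (⟨⟨c, rfl⟩, h2⟩ | ⟨h1, h2⟩)
    · -- start in the gadget
      rcases e with e0 | ⟨⟨r, i⟩ | ⟨r, b⟩⟩
      · -- impossible: an original edge has both ends in `Sum.inl`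
        exfalso
        have hx : (Sum.inr (q, c) : V ⊕ ((Σ v : V, Fin (G.mdeg v)) × Bool))
            ∈ (G.ends e0).map Sum.inl := by
          rw [show (G.ends e0).map Sum.inl = G.star.ends (Sum.inl e0) from rfl, he]
          exact Sym2.mem_mk_left _ _
        rw [Sym2.mem_map] at hx
        obtain ⟨a, -, ha⟩ := hx
        exact nomatch ha
      · -- a parallel gadget edge: stay inside the gadget
        have he' : s(Sum.inr (r, false), Sum.inr (r, true)) = s(Sum.inr (q, c), _) := he
        rw [Sym2.eq_iff] at he'
        rcases he' with ⟨ha, hb⟩ | ⟨ha, hb⟩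
        · obtain ⟨rfl, rfl⟩ : r = q ∧ false = c := by
            simpa using Sum.inr.inj ha
          obtain ⟨b, hb'⟩ := ih (Or.inl ⟨⟨true, hb.symm⟩, h2⟩)
          exact ⟨b, by simp [Walk.edges, hb']⟩
        · obtain ⟨rfl, rfl⟩ : r = q ∧ true = c := by
            simpa using Sum.inr.inj hb
          obtain ⟨b, hb'⟩ := ih (Or.inl ⟨⟨false, ha.symm⟩, h2⟩)
          exact ⟨b, by simp [Walk.edges, hb']⟩
      · -- a cut edge incident with the gadget
        have he' : s(Sum.inl r.1, Sum.inr (r, b)) = s(Sum.inr (q, c), _) := he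
        rw [Sym2.eq_iff] at he'
        rcases he' with ⟨ha, hb⟩ | ⟨ha, hb⟩
        · exact nomatch ha
        · obtain ⟨rfl, rfl⟩ : r = q ∧ b = c := by
            simpa using Sum.inr.inj hb
          exact ⟨b, by simp [Walk.edges]⟩
    · -- start outside the gadget, end inside
      rcases e with e0 | ⟨⟨r, i⟩ | ⟨r, b⟩⟩
      · -- an original edge: next vertex is still of the form `Sum.inl`
        have hv : v ∈ (G.ends e0).map Sum.inl := by
          rw [show (G.ends e0).map Sum.inl = G.star.ends (Sum.inl e0) from rfl, he]
          exact Sym2.mem_mk_right _ _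
        rw [Sym2.mem_map] at hv
        obtain ⟨a, -, ha⟩ := hv
        obtain ⟨b, hb'⟩ := ih (Or.inr ⟨by rw [← ha]; simp, h2⟩)
        exact ⟨b, by simp [Walk.edges, hb']⟩
      · have he' : s(Sum.inr (r, false), Sum.inr (r, true)) = s(u, v) := he
        rw [Sym2.eq_iff] at he'
        by_cases hr : r = q
        · subst hr
          rcases he' with ⟨ha, hb⟩ | ⟨ha, hb⟩
          · exact absurd ⟨false, ha.symm⟩ h1
          · exact absurd ⟨true, hb.symm⟩ h1
        · have hv : ¬ ∃ c, v = Sum.inr (q, c) := by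
            rcases he' with ⟨ha, hb⟩ | ⟨ha, hb⟩
            · rw [← hb]; rintro ⟨c, hc⟩
              exact hr (congrArg Prod.fst (Sum.inr.inj hc))
            · rw [← ha]; rintro ⟨c, hc⟩
              exact hr (congrArg Prod.fst (Sum.inr.inj hc))
          obtain ⟨b, hb'⟩ := ih (Or.inr ⟨hv, h2⟩)
          exact ⟨b, by simp [Walk.edges, hb']⟩
      · have he' : s(Sum.inl r.1, Sum.inr (r, b)) = s(u, v) := he
        rw [Sym2.eq_iff] at he'
        rcases he' with ⟨ha, hb⟩ | ⟨ha, hb⟩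
        · by_cases hr : r = q
          · subst hr; exact ⟨b, by simp [Walk.edges]⟩
          · have hv : ¬ ∃ c, v = Sum.inr (q, c) := by
              rw [← hb]; rintro ⟨c, hc⟩
              exact hr (congrArg Prod.fst (Sum.inr.inj hc))
            obtain ⟨b', hb'⟩ := ih (Or.inr ⟨hv, h2⟩)
            exact ⟨b', by simp [Walk.edges, hb']⟩
        · have hv : ¬ ∃ c, v = Sum.inr (q, c) := by
            rw [← ha]; rintro ⟨c, hc⟩
            exact nomatch hc
          obtain ⟨b', hb'⟩ := ih (Or.inr ⟨hv, h2⟩)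
          exact ⟨b', by simp [Walk.edges, hb']⟩

/-- Any walk in `G*` starting inside the gadget pair at `q` and ending outside it
passes through the hub vertex `q.1`. -/
lemma star_gadget_support (q : Σ v : V, Fin (G.mdeg v)) :
    ∀ {x y} (w : G.star.Walk x y),
      (∃ c, x = Sum.inr (q, c)) → (¬ ∃ c, y = Sum.inr (q, c)) →
      Sum.inl q.1 ∈ w.support := by
  intro x y w
  induction w with
  | nil v =>
    rintro h1 h2
    exact absurd h1 h2
  | @cons u v yw e he p ih =>
    rintro ⟨c, rfl⟩ h2
    rcases e with e0 | ⟨⟨r, i⟩ | ⟨r, b⟩⟩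
    · exfalso
      have hx : (Sum.inr (q, c) : V ⊕ ((Σ v : V, Fin (G.mdeg v)) × Bool))
          ∈ (G.ends e0).map Sum.inl := by
        rw [show (G.ends e0).map Sum.inl = G.star.ends (Sum.inl e0) from rfl, he]
        exact Sym2.mem_mk_left _ _
      rw [Sym2.mem_map] at hx
      obtain ⟨a, -, ha⟩ := hx
      exact nomatch ha
    · have he' : s(Sum.inr (r, false), Sum.inr (r, true)) = s(Sum.inr (q, c), _) := he
      rw [Sym2.eq_iff] at he'
      rcases he' with ⟨ha, hb⟩ | ⟨ha, hb⟩
      · obtain ⟨rfl, rfl⟩ : r = q ∧ false = c := by simpa using Sum.inr.inj ha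
        have := ih ⟨true, hb.symm⟩ h2
        simp [Walk.support, this]
      · obtain ⟨rfl, rfl⟩ : r = q ∧ true = c := by simpa using Sum.inr.inj hb
        have := ih ⟨false, ha.symm⟩ h2
        simp [Walk.support, this]
    · have he' : s(Sum.inl r.1, Sum.inr (r, b)) = s(Sum.inr (q, c), _) := he
      rw [Sym2.eq_iff] at he'
      rcases he' with ⟨ha, hb⟩ | ⟨ha, hb⟩
      · exact nomatch ha
      · obtain ⟨rfl, rfl⟩ : r = q ∧ b = c := by simpa using Sum.inr.inj hb
        have : Sum.inl r.1 ∈ p.support := by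
          rw [ha]; exact Walk.start_mem_support' p
        simp [Walk.support, this]

/-- Every vertex on a path of `G*` between two original vertices is an original vertex. -/
lemma star_support_inl :
    ∀ {x y} (w : G.star.Walk x y), w.IsPath →
      (∃ a, x = Sum.inl a) → (∃ b, y = Sum.inl b) →
      ∀ z ∈ w.support, ∃ a, z = Sum.inl a := by
  intro x y w
  induction w with
  | nil v =>
    rintro - hx hy z hz
    obtain rfl : z = v := by simpa [Walk.support] using hz
    exact hx
  | @cons u v yw e he p ih =>
    rintro hp ⟨a, rfl⟩ hy z hz
    have hp' : p.IsPath := by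
      have : (Sum.inl a :: p.support).Nodup := hp
      exact this.of_cons
    rw [show (Walk.cons e he p).support = Sum.inl a :: p.support from rfl] at hz
    rcases List.mem_cons.1 hz with rfl | hz'
    · exact ⟨a, rfl⟩
    rcases e with e0 | ⟨⟨r, i⟩ | ⟨r, b⟩⟩
    · have hv : v ∈ (G.ends e0).map Sum.inl := by
        rw [show (G.ends e0).map Sum.inl = G.star.ends (Sum.inl e0) from rfl, he]
        exact Sym2.mem_mk_right _ _
      rw [Sym2.mem_map] at hv
      obtain ⟨a', -, ha'⟩ := hv
      exact ih hp' ⟨a', ha'.symm⟩ hy z hz'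
    · exfalso
      have hx : (Sum.inl a : V ⊕ ((Σ v : V, Fin (G.mdeg v)) × Bool))
          ∈ s(Sum.inr (r, false), Sum.inr (r, true)) := by
        rw [show (s(Sum.inr (r, false), Sum.inr (r, true)) :
          Sym2 (V ⊕ ((Σ v : V, Fin (G.mdeg v)) × Bool))) =
            G.star.ends (Sum.inr (Sum.inl (r, i))) from rfl, he]
        exact Sym2.mem_mk_left _ _
      rw [Sym2.mem_iff] at hx
      rcases hx with hx | hx <;> exact nomatch hx
    · have he' : s(Sum.inl r.1, Sum.inr (r, b)) = s(Sum.inl a, v) := he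
      rw [Sym2.eq_iff] at he'
      rcases he' with ⟨ha, hb⟩ | ⟨ha, hb⟩
      · -- the walk dives into the gadget at `r` and must come back through `r.1 = a`
        exfalso
        obtain ⟨b', hb'⟩ := hy
        have hmem : Sum.inl r.1 ∈ p.support :=
          star_gadget_support G r p ⟨b, hb.symm⟩ (by rw [hb']; rintro ⟨c, hc⟩; exact nomatch hc)
        have : (Sum.inl a :: p.support).Nodup := hp
        rw [← ha] at this
        exact (List.nodup_cons.1 this).1 hmem
      · exact absurd hb (fun h => nomatch h)

/-- A walk of `G*` between original vertices whose support consists of original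
vertices projects to a walk of `G`. -/
lemma star_project :
    ∀ {x y} (w : G.star.Walk x y),
      (∀ z ∈ w.support, ∃ a, z = Sum.inl a) →
      ∀ a b, x = Sum.inl a → y = Sum.inl b →
      ∃ g : G.Walk a b, g.support.map Sum.inl = w.support ∧ g.edges.map Sum.inl = w.edges := by
  intro x y w
  induction w with
  | nil v =>
    rintro - a b rfl hb
    obtain rfl : a = b := Sum.inl.inj hb
    exact ⟨Walk.nil a, by simp [Walk.support], by simp [Walk.edges]⟩
  | @cons u v yw e he p ih =>
    rintro hs a b rfl hb
    obtain ⟨v', hv'⟩ := hs _ (by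
      rw [show (Walk.cons e he p).support = Sum.inl a :: p.support from rfl]
      exact List.mem_cons_of_mem _ (Walk.start_mem_support' p))
    rcases e with e0 | ⟨⟨r, i⟩ | ⟨r, b0⟩⟩
    · have he' : (G.ends e0).map (Sum.inl : V → V ⊕ ((Σ v : V, Fin (G.mdeg v)) × Bool)) =
          s(Sum.inl a, Sum.inl v') := by
        rw [show (G.ends e0).map Sum.inl = G.star.ends (Sum.inl e0) from rfl, he, hv']
      have hG : G.ends e0 = s(a, v') := by
        apply Sym2.map.injective (f := (Sum.inl : V → V ⊕ ((Σ v : V, Fin (G.mdeg v)) × Bool)))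
          Sum.inl_injective
        rw [Sym2.map_pair_eq]
        exact he'
      obtain ⟨g, hg1, hg2⟩ := ih (fun z hz => hs z (List.mem_cons_of_mem _ hz)) v' b hv' hb
      refine ⟨Walk.cons e0 hG g, ?_, ?_⟩
      · show Sum.inl a :: g.support.map Sum.inl = Sum.inl a :: p.support
        rw [hg1]
      · show Sum.inl e0 :: g.edges.map Sum.inl = Sum.inl e0 :: p.edges
        rw [hg2]
    · exfalso
      have hx : (Sum.inl a : V ⊕ ((Σ v : V, Fin (G.mdeg v)) × Bool))
          ∈ s(Sum.inr (r, false), Sum.inr (r, true)) := by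
        rw [show (s(Sum.inr (r, false), Sum.inr (r, true)) :
          Sym2 (V ⊕ ((Σ v : V, Fin (G.mdeg v)) × Bool))) =
            G.star.ends (Sum.inr (Sum.inl (r, i))) from rfl, he]
        exact Sym2.mem_mk_left _ _
      rw [Sym2.mem_iff] at hx
      rcases hx with hx | hx <;> exact nomatch hx
    · exfalso
      have he' : s(Sum.inl r.1, Sum.inr (r, b0)) = s(Sum.inl a, Sum.inl v') := by
        rw [show (s(Sum.inl r.1, Sum.inr (r, b0)) :
          Sym2 (V ⊕ ((Σ v : V, Fin (G.mdeg v)) × Bool))) =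
            G.star.ends (Sum.inr (Sum.inr (r, b0))) from rfl, he, hv']
      rw [Sym2.eq_iff] at he'
      rcases he' with ⟨ha, hb2⟩ | ⟨ha, hb2⟩ <;> exact nomatch hb2

variable {H : Multigraph V1 E1}

lemma exists_incident (hc : H.Connected) (he : Nonempty E1) (u : V1) :
    ∃ e, u ∈ H.ends e := by
  obtain ⟨e0⟩ := he
  obtain ⟨a, b, hab⟩ := sym2_exists_rep (H.ends e0)
  have ha : a ∈ H.ends e0 := by rw [hab]; exact Sym2.mem_mk_left _ _
  obtain ⟨w⟩ := hc.2 u a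
  cases w with
  | nil => exact ⟨e0, ha⟩
  | cons e he' p => exact ⟨e, he' ▸ Sym2.mem_mk_left _ _⟩

lemma exists_other (e : E1) (u : V1) (hu : u ∈ H.ends e) :
    ∃ w, w ≠ u ∧ H.ends e = s(u, w) := by
  obtain ⟨w, hw⟩ := Sym2.mem_iff_exists.1 hu
  refine ⟨w, fun h => H.loopless e ?_, hw⟩
  rw [hw, Sym2.mk_isDiag_iff]
  exact h.symm

variable {G}

lemma model_cross (m : ImmersionModel H.plus G.star) (q : Σ v : V, Fin (G.mdeg v))
    (f : E1 ⊕ ((V1 × Fin 2) ⊕ (V1 × Bool))) (z1 z2 : V1 ⊕ (V1 × Bool))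
    (hends : H.plus.ends f = s(z1, z2))
    (h1 : ∃ c, m.vmap z1 = Sum.inr (q, c)) (h2 : ¬ ∃ c, m.vmap z2 = Sum.inr (q, c)) :
    ∃ b, Sum.inr (Sum.inr (q, b)) ∈ (m.path f).edges := by
  have h := (m.ends_eq f).symm.trans hends
  rw [Sym2.eq_iff] at h
  rcases h with ⟨ha, hb⟩ | ⟨ha, hb⟩
  · exact star_cross G q (m.path f) (Or.inl ⟨by rw [ha]; exact h1, by rw [hb]; exact h2⟩)
  · exact star_cross G q (m.path f) (Or.inr ⟨by rw [ha]; exact h2, by rw [hb]; exact h1⟩)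

lemma three_cross (m : ImmersionModel H.plus G.star) (q : Σ v : V, Fin (G.mdeg v))
    (f1 f2 f3 : E1 ⊕ ((V1 × Fin 2) ⊕ (V1 × Bool)))
    (h12 : f1 ≠ f2) (h13 : f1 ≠ f3) (h23 : f2 ≠ f3)
    (c1 : ∃ b, Sum.inr (Sum.inr (q, b)) ∈ (m.path f1).edges)
    (c2 : ∃ b, Sum.inr (Sum.inr (q, b)) ∈ (m.path f2).edges)
    (c3 : ∃ b, Sum.inr (Sum.inr (q, b)) ∈ (m.path f3).edges) : False := by
  obtain ⟨b1, hb1⟩ := c1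
  obtain ⟨b2, hb2⟩ := c2
  obtain ⟨b3, hb3⟩ := c3
  have h : b1 = b2 ∨ b1 = b3 ∨ b2 = b3 := by
    cases b1 <;> cases b2 <;> cases b3 <;> simp
  rcases h with h | h | h
  · exact m.edge_disjoint f1 f2 h12 _ hb1 (by rw [h]; exact hb2)
  · exact m.edge_disjoint f1 f3 h13 _ hb1 (by rw [h]; exact hb3)
  · exact m.edge_disjoint f2 f3 h23 _ hb2 (by rw [h]; exact hb3)

/-- Branch vertices of an `H⁺`-immersion model in `G*` corresponding to vertices of `H`
are original vertices of `G`. -/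
lemma vmap_inl (hc : H.Connected) (he : Nonempty E1)
    (m : ImmersionModel H.plus G.star) (u : V1) :
    ∃ v, m.vmap (Sum.inl u) = Sum.inl v := by
  rcases hval : m.vmap (Sum.inl u) with v | ⟨q, c⟩
  · exact ⟨v, rfl⟩
  exfalso
  have hSu : ∃ b, m.vmap (Sum.inl u) = Sum.inr (q, b) := ⟨c, hval⟩
  obtain ⟨e_u, hu_mem⟩ := exists_incident hc he u
  obtain ⟨w, hwu, hend⟩ := exists_other e_u u hu_mem
  have pigeon : ∀ z1 z2 : V1 ⊕ (V1 × Bool),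
      (∃ b, m.vmap z1 = Sum.inr (q, b)) → (∃ b, m.vmap z2 = Sum.inr (q, b)) → z1 ≠ z2 →
      ∀ z3, z3 ≠ z1 → z3 ≠ z2 → ¬ ∃ b, m.vmap z3 = Sum.inr (q, b) := by
    rintro z1 z2 ⟨b1, h1⟩ ⟨b2, h2⟩ h12 z3 h31 h32 ⟨b3, h3⟩
    have h : b1 = b2 ∨ b3 = b1 ∨ b3 = b2 := by
      cases b1 <;> cases b2 <;> cases b3 <;> simp
    rcases h with h | h | h
    · exact h12 (m.vmap_inj (h1.trans (by rw [h, ← h2])))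
    · exact h31 (m.vmap_inj (h3.trans (by rw [h, ← h1])))
    · exact h32 (m.vmap_inj (h3.trans (by rw [h, ← h2])))
  have hf1 : H.plus.ends (Sum.inl e_u) = s(Sum.inl u, Sum.inl w) := by
    show (H.ends e_u).map Sum.inl = _
    rw [hend, Sym2.map_pair_eq]
  have hneuw : (Sum.inl u : V1 ⊕ (V1 × Bool)) ≠ Sum.inl w := by
    simpa using hwu.symm
  by_cases hA : ∃ b, m.vmap (Sum.inl w) = Sum.inr (q, b)
  · have hB := pigeon _ _ hSu hA hneuw (Sum.inr (u, false)) (by simp) (by simp)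
    have hC := pigeon _ _ hSu hA hneuw (Sum.inr (u, true)) (by simp) (by simp)
    have hW := pigeon _ _ hSu hA hneuw (Sum.inr (w, false)) (by simp) (by simp)
    exact three_cross m q (Sum.inr (Sum.inr (u, false))) (Sum.inr (Sum.inr (u, true)))
      (Sum.inr (Sum.inr (w, false)))
      (by simp) (by simp [hwu.symm]) (by simp [hwu.symm])
      (model_cross m q _ (Sum.inl u) (Sum.inr (u, false)) rfl hSu hB)
      (model_cross m q _ (Sum.inl u) (Sum.inr (u, true)) rfl hSu hC)
      (model_cross m q _ (Sum.inl w) (Sum.inr (w, false)) rfl hA hW)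
  · by_cases hB : ∃ b, m.vmap (Sum.inr (u, false)) = Sum.inr (q, b)
    · have hC := pigeon _ _ hSu hB (by simp) (Sum.inr (u, true)) (by simp) (by simp)
      exact three_cross m q (Sum.inl e_u) (Sum.inr (Sum.inr (u, true)))
        (Sum.inr (Sum.inl (u, 0)))
        (by simp) (by simp) (by simp)
        (model_cross m q _ (Sum.inl u) (Sum.inl w) hf1 hSu hA)
        (model_cross m q _ (Sum.inl u) (Sum.inr (u, true)) rfl hSu hC)
        (model_cross m q _ (Sum.inr (u, false)) (Sum.inr (u, true)) rfl hB hC)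
    · by_cases hC : ∃ b, m.vmap (Sum.inr (u, true)) = Sum.inr (q, b)
      · exact three_cross m q (Sum.inl e_u) (Sum.inr (Sum.inr (u, false)))
          (Sum.inr (Sum.inl (u, 0)))
          (by simp) (by simp) (by simp)
          (model_cross m q _ (Sum.inl u) (Sum.inl w) hf1 hSu hA)
          (model_cross m q _ (Sum.inl u) (Sum.inr (u, false)) rfl hSu hB)
          (model_cross m q _ (Sum.inr (u, true)) (Sum.inr (u, false))
            (show H.plus.ends (Sum.inr (Sum.inl (u, 0))) =
              s(Sum.inr (u, true), Sum.inr (u, false)) from Sym2.eq_swap) hC hB)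
      · exact three_cross m q (Sum.inl e_u) (Sum.inr (Sum.inr (u, false)))
          (Sum.inr (Sum.inr (u, true)))
          (by simp) (by simp) (by simp)
          (model_cross m q _ (Sum.inl u) (Sum.inl w) hf1 hSu hA)
          (model_cross m q _ (Sum.inl u) (Sum.inr (u, false)) rfl hSu hB)
          (model_cross m q _ (Sum.inl u) (Sum.inr (u, true)) rfl hSu hC)

/-- From an `H⁺`-immersion model in `G*`, extract an `H`-immersion model in `G`
whose edges all come from edges used by the original model. -/
lemma exists_project (hc : H.Connected) (he : Nonempty E1)
    (m : ImmersionModel H.plus G.star) :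
    ∃ m' : ImmersionModel H G, ∀ x, x ∈ m'.edgeSet → Sum.inl x ∈ m.edgeSet := by
  choose vmap1 hv using fun u => vmap_inl hc he m u
  have key : ∀ e : E1, ∃ a b : V1, m.src (Sum.inl e) = Sum.inl a ∧
      m.tgt (Sum.inl e) = Sum.inl b ∧ H.ends e = s(a, b) := by
    intro e
    have h' : (H.ends e).map Sum.inl = s(m.src (Sum.inl e), m.tgt (Sum.inl e)) :=
      m.ends_eq (Sum.inl e)
    obtain ⟨a0, b0, hab⟩ := sym2_exists_rep (H.ends e)
    rw [hab, Sym2.map_pair_eq, Sym2.eq_iff] at h'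
    rcases h' with ⟨h1, h2⟩ | ⟨h1, h2⟩
    · exact ⟨a0, b0, h1.symm, h2.symm, hab⟩
    · exact ⟨b0, a0, h2.symm, h1.symm, hab.trans Sym2.eq_swap⟩
  choose src1 tgt1 hsrc htgt hends using key
  have hpaths : ∀ e : E1, ∃ g : G.Walk (vmap1 (src1 e)) (vmap1 (tgt1 e)),
      g.support.Nodup ∧ ∀ x, x ∈ g.edges → Sum.inl x ∈ (m.path (Sum.inl e)).edges := by
    intro e
    have hx : m.vmap (m.src (Sum.inl e)) = Sum.inl (vmap1 (src1 e)) := by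
      rw [hsrc e, hv]
    have hy : m.vmap (m.tgt (Sum.inl e)) = Sum.inl (vmap1 (tgt1 e)) := by
      rw [htgt e, hv]
    have hsup := star_support_inl G (m.path (Sum.inl e)) (m.path_isPath (Sum.inl e))
      ⟨_, hx⟩ ⟨_, hy⟩
    obtain ⟨g, hg1, hg2⟩ := star_project G (m.path (Sum.inl e)) hsup _ _ hx hy
    refine ⟨g, ?_, ?_⟩
    · have hnd := m.path_isPath (Sum.inl e)
      have hmapped : (List.map (Sum.inl : V → V ⊕ ((Σ v : V, Fin (G.mdeg v)) × Bool))
          g.support).Nodup := by rw [hg1]; exact hnd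
      exact hmapped.of_map _
    · intro x hx'
      rw [← hg2]
      exact List.mem_map_of_mem hx'
  choose path1 hnodup hfwd using hpaths
  refine ⟨⟨vmap1, ?_, src1, tgt1, hends, path1, hnodup, ?_⟩, ?_⟩
  · intro a b hab
    have : m.vmap (Sum.inl a) = m.vmap (Sum.inl b) := by
      rw [hv, hv]
      exact congrArg _ hab
    exact Sum.inl.inj (m.vmap_inj this)
  · intro e1 e2 hne x h1 h2
    exact m.edge_disjoint (Sum.inl e1) (Sum.inl e2) (by simpa using hne) (Sum.inl x)
      (hfwd e1 x h1) (hfwd e2 x h2)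
  · rintro x ⟨e, hx⟩
    exact ⟨Sum.inl e, hfwd e x hx⟩

end Multigraph

end PackProof

/-- `pack_{H⁺}(G*) ≤ pack_H(G)` for connected `H` with at least one edge. -/
theorem packNum_plus_star_le {V1 E1 V E : Type} [Fintype E]
    (H : Multigraph V1 E1) (G : Multigraph V E)
    (hc : H.Connected) (he : Nonempty E1) :
    Multigraph.packNum H.plus G.star ≤ Multigraph.packNum H G := by
  classical
  apply csSup_le_csSup
  · -- the right-hand set is bounded above by the number of edges of `G`
    refine ⟨Fintype.card E, ?_⟩
    rintro n ⟨f, hf⟩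
    obtain ⟨e1⟩ := he
    have hne : ∀ i : Fin n, ((f i).path e1).edges ≠ [] := by
      intro i
      apply Multigraph.Walk.edges_ne_nil'
      intro hcontra
      have hst : (f i).src e1 = (f i).tgt e1 := (f i).vmap_inj hcontra
      exact H.loopless e1 (by rw [(f i).ends_eq e1, hst, Sym2.mk_isDiag_iff])
    have hpick : ∀ i : Fin n, ∃ x, x ∈ ((f i).path e1).edges :=
      fun i => List.exists_mem_of_ne_nil _ (hne i)
    choose pick hpickmem using hpick
    have hinj : Function.Injective pick := by
      intro i j hij
      by_contra hij'
      have hd := hf i j hij'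
      have h1 : pick i ∈ (f i).edgeSet := ⟨e1, hpickmem i⟩
      have h2 : pick i ∈ (f j).edgeSet := ⟨e1, hij ▸ hpickmem j⟩
      exact Set.disjoint_left.1 hd h1 h2
    calc n = Fintype.card (Fin n) := (Fintype.card_fin n).symm
      _ ≤ Fintype.card E := Fintype.card_le_of_injective pick hinj
  · -- the left-hand set is nonempty (it contains `0`)
    exact ⟨0, fun i => i.elim0, fun i => i.elim0⟩
  · -- every `H⁺`-packing of `G*` projects to an `H`-packing of `G`
    rintro n ⟨f, hf⟩
    choose g hg using fun i => Multigraph.exists_project hc he (f i)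
    refine ⟨g, ?_⟩
    intro i j hij
    rw [Set.disjoint_left]
    intro x hxi hxj
    exact Set.disjoint_left.1 (hf i j hij) (hg i x hxi) (hg j x hxj)
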